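/- Suppose τ is a negative p-simplex paired with σ = low_R(τ), and D_p = R_p U_p is obtained by lazy reduction. Let τ_k be a p-simplex later in the filtration with low_{R_p}(τ_k) < σ (strictly earlier). If U_p[τ, τ_k] = 0, then after transposing τ_k to the position immediately before τ (past any intermediate p-simplices τ_i with U_p[τ, τ_i] ≠ 0, assuming all intermediate p-simplices satisfy low_{R_p}(τ_i) ≤ σ), the simplex τ_k is still not paired with σ; if U_p[τ, τ_k] ≠ 0, then after the transposition τ_k becomes paired with σ. -/

import Mathlib

open Matrix

variable {F : Type*} [Field F] [DecidableEq F] {m n : ℕ}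

/-- 1-based row index of the lowest nonzero entry of column `j`;
`0` (the dummy minimal value) if the column is zero. -/
def lowNat (R : Matrix (Fin m) (Fin n) F) (j : Fin n) : ℕ :=
  (Finset.univ.filter fun i : Fin m => R i j ≠ 0).sup fun i => i.val + 1

/-- Subtract `α` times column `i` from column `j`. -/
def addColMul {k : ℕ} (M : Matrix (Fin k) (Fin n) F) (α : F) (i j : Fin n) :
    Matrix (Fin k) (Fin n) F :=
  fun a b => if b = j then M a b - α * M a i else M a b

/-- Add `α` times row `j` to row `i`. -/
def addRowMul (M : Matrix (Fin n) (Fin n) F) (α : F) (i j : Fin n) :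
    Matrix (Fin n) (Fin n) F :=
  fun a b => if a = i then M a b + α * M j b else M a b

/-- The state `(R, V, U)` maintained by the lazy reduction. -/
structure RedState (F : Type*) (m n : ℕ) where
  R : Matrix (Fin m) (Fin n) F
  V : Matrix (Fin n) (Fin n) F
  U : Matrix (Fin n) (Fin n) F

/-- Inner while-loop of the lazy reduction for column `j`: while the column is
nonzero and some earlier column has the same low, subtract
`α = R[low, j] / R[low, i]` times column `i` from column `j` (in `R` and `V`)
and record the inverse row operation in `U`.  Each iteration strictly decreases
the low of column `j`, so fuel `m + 1` always suffices. -/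
noncomputable def reduceColAux : ℕ → RedState F m n → Fin n → RedState F m n
  | 0, s, _ => s
  | fuel + 1, s, j =>
    if h : lowNat s.R j ≠ 0 ∧ ∃ i : Fin n, i < j ∧ lowNat s.R i = lowNat s.R j then
      let i := h.2.choose
      let r : Fin m := ⟨lowNat s.R j - 1, by
        have hle : lowNat s.R j ≤ m := Finset.sup_le fun a _ => a.isLt
        have := h.1
        omega⟩
      let α := s.R r j / s.R r i
      reduceColAux fuel ⟨addColMul s.R α i j, addColMul s.V α i j, addRowMul s.U α i j⟩ j
    else s

/-- The lazy reduction algorithm: starting from `R = D`, `V = U = 1`, process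
the columns in increasing order. -/
noncomputable def lazyReduce (D : Matrix (Fin m) (Fin n) F) : RedState F m n :=
  (List.finRange n).foldl (fun s j => reduceColAux (m + 1) s j) ⟨D, 1, 1⟩

def ReducedMat (R : Matrix (Fin m) (Fin n) F) : Prop :=
  ∀ j₁ j₂ : Fin n, lowNat R j₁ = lowNat R j₂ → lowNat R j₁ ≠ 0 → j₁ = j₂

def UpperTriFin (V : Matrix (Fin n) (Fin n) F) : Prop :=
  ∀ i j : Fin n, j < i → V i j = 0

/-- `R = D * V` is a reduced decomposition of `D`. -/
def ReducedDecomp (D R : Matrix (Fin m) (Fin n) F)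
    (V : Matrix (Fin n) (Fin n) F) : Prop :=
  ReducedMat R ∧ UpperTriFin V ∧ IsUnit V ∧ R = D * V

/-- The column permutation moving column `τk` to the position immediately
before `τ` (assuming `τ < τk`): new position `c` holds old column `movePerm τ τk c`. -/
def movePerm (τ τk : Fin n) : Fin n → Fin n := fun c =>
  if c.val < τ.val then c
  else if c.val = τ.val then τk
  else if c.val ≤ τk.val then ⟨c.val - 1, lt_of_le_of_lt (Nat.sub_le _ _) c.isLt⟩
  else c

section Helpers

/-- Low of a vector. -/
def lowVec (v : Fin m → F) : ℕ :=
  (Finset.univ.filter fun i : Fin m => v i ≠ 0).sup fun i => i.val + 1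

lemma lowNat_eq_lowVec (R : Matrix (Fin m) (Fin n) F) (j : Fin n) :
    lowNat R j = lowVec (fun i => R i j) := rfl

lemma le_lowVec {v : Fin m → F} (a : Fin m) (h : v a ≠ 0) : a.val + 1 ≤ lowVec v :=
  Finset.le_sup (f := fun i : Fin m => i.val + 1) (by simp [h])

lemma eq_zero_of_lowVec_lt {v : Fin m → F} {a : Fin m} (h : lowVec v < a.val + 1) : v a = 0 := by
  by_contra hv
  exact absurd (le_lowVec a hv) (by omega)

lemma lowVec_witness {v : Fin m → F} (h : lowVec v ≠ 0) :
    ∃ a : Fin m, v a ≠ 0 ∧ a.val + 1 = lowVec v := by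
  have hne : (Finset.univ.filter fun i : Fin m => v i ≠ 0).Nonempty := by
    rcases Finset.eq_empty_or_nonempty (Finset.univ.filter fun i : Fin m => v i ≠ 0) with he | hne
    · exfalso; apply h; unfold lowVec; rw [he]; rfl
    · exact hne
  obtain ⟨a, ha, hs⟩ := Finset.exists_mem_eq_sup _ hne fun i : Fin m => i.val + 1
  exact ⟨a, by simpa using ha, hs.symm⟩

lemma lowVec_le (v : Fin m → F) : lowVec v ≤ m :=
  Finset.sup_le fun a _ => a.isLt

lemma eq_zero_of_lowNat_lt {M : Matrix (Fin m) (Fin n) F} {j : Fin n} {a : Fin m}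
    (h : lowNat M j < a.val + 1) : M a j = 0 :=
  eq_zero_of_lowVec_lt (v := fun i => M i j) (by rw [← lowNat_eq_lowVec]; exact h)

lemma lowNat_congr {R R' : Matrix (Fin m) (Fin n) F} {j : Fin n}
    (h : ∀ a, R a j = R' a j) : lowNat R j = lowNat R' j := by
  rw [lowNat_eq_lowVec, lowNat_eq_lowVec]
  congr 1
  ext a
  rw [h a]

/-- The sup formula: the low of `R *ᵥ y` for reduced `R`. -/
lemma lowVec_mulVec {R : Matrix (Fin m) (Fin n) F} (hR : ReducedMat R) (y : Fin n → F) :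
    lowVec (R.mulVec y) = (Finset.univ.filter fun k : Fin n => y k ≠ 0).sup fun k => lowNat R k := by
  apply le_antisymm
  · apply Finset.sup_le
    intro a ha
    have hva : R.mulVec y a ≠ 0 := by simpa using ha
    have : ∃ k, R a k * y k ≠ 0 := by
      by_contra hk
      push_neg at hk
      exact hva (by simpa [Matrix.mulVec, dotProduct] using Finset.sum_eq_zero fun k _ => hk k)
    obtain ⟨k, hk⟩ := this
    have hyk : y k ≠ 0 := fun h => hk (by simp [h])
    have hRak : R a k ≠ 0 := fun h => hk (by simp [h])
    calc a.val + 1 ≤ lowNat R k := le_lowVec a hRak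
      _ ≤ _ := Finset.le_sup (by simp [hyk])
  · apply Finset.sup_le
    intro k hk
    have hyk : y k ≠ 0 := by simpa using hk
    set s := (Finset.univ.filter fun k : Fin n => y k ≠ 0).sup fun k => lowNat R k with hs
    rcases Nat.eq_zero_or_pos (lowNat R k) with h0 | hpos
    · simp [h0]
    -- pick the column attaining the sup
    have hne : (Finset.univ.filter fun k : Fin n => y k ≠ 0).Nonempty := ⟨k, by simp [hyk]⟩
    obtain ⟨k₀, hk₀mem, hk₀⟩ :=
      Finset.exists_mem_eq_sup _ hne fun k : Fin n => lowNat R k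
    have hyk₀ : y k₀ ≠ 0 := by simpa using hk₀mem
    have hks : lowNat R k ≤ s := Finset.le_sup (by simp [hyk])
    have hspos : s ≠ 0 := by omega
    have hsle : s ≤ m := by
      rw [hs, hk₀]; exact lowVec_le _
    set r : Fin m := ⟨s - 1, by omega⟩ with hr
    obtain ⟨a₀, ha₀, ha₀v⟩ := lowVec_witness (v := fun i => R i k₀) (by rw [← lowNat_eq_lowVec, ← hk₀, ← hs]; exact hspos)
    have ha₀r : a₀ = r := by
      apply Fin.ext
      have : a₀.val + 1 = s := by rw [ha₀v, ← lowNat_eq_lowVec, ← hk₀, ← hs]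
      simp [hr]; omega
    have hrk₀ : R r k₀ ≠ 0 := ha₀r ▸ ha₀
    have hmain : R.mulVec y r ≠ 0 := by
      have hsum : R.mulVec y r = R r k₀ * y k₀ := by
        rw [Matrix.mulVec, dotProduct]
        apply Finset.sum_eq_single_of_mem k₀ (Finset.mem_univ _)
        intro c _ hck₀
        rcases eq_or_ne (y c) 0 with hyc | hyc
        · simp [hyc]
        have : R r c = 0 := by
          by_contra hrc
          have h1 : s ≤ lowNat R c := by
            have := le_lowVec (v := fun i => R i c) r hrc
            rw [← lowNat_eq_lowVec] at this
            simp [hr] at this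
            omega
          have h2 : lowNat R c ≤ s := Finset.le_sup (by simp [hyc])
          have : lowNat R c = lowNat R k₀ := by omega
          exact hck₀ (hR c k₀ this (by omega))
        simp [this]
      rw [hsum]
      exact mul_ne_zero hrk₀ hyk₀
    have := le_lowVec r hmain
    simp [hr] at this
    omega

/-- Column operation paired with inverse row operation preserves the product. -/
lemma addColMul_mul_addRowMul (M : Matrix (Fin m) (Fin n) F) (N : Matrix (Fin n) (Fin n) F)
    (α : F) {i j : Fin n} (hij : i ≠ j) :
    addColMul M α i j * addRowMul N α i j = M * N := by
  ext a b
  rw [Matrix.mul_apply, Matrix.mul_apply]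
  have key : ∀ k : Fin n, addColMul M α i j a k * addRowMul N α i j k b =
      M a k * N k b + ((if k = i then M a i * (α * N j b) else 0) +
        (if k = j then -(α * M a i) * N j b else 0)) := by
    intro k
    rcases eq_or_ne k i with hk | hk
    · subst hk
      simp [addColMul, addRowMul, hij, if_neg hij]
      ring
    rcases eq_or_ne k j with hk' | hk'
    · subst hk'
      simp [addColMul, addRowMul, hk, Ne.symm hij]
      ring
    · simp [addColMul, addRowMul, hk, hk']
  rw [Finset.sum_congr rfl fun k _ => key k, Finset.sum_add_distrib, Finset.sum_add_distrib]
  simp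
  ring

lemma addRowMul_upperTri {N : Matrix (Fin n) (Fin n) F} (hN : UpperTriFin N)
    (α : F) {i j : Fin n} (hij : i < j) : UpperTriFin (addRowMul N α i j) := by
  intro a b hba
  unfold addRowMul
  rcases eq_or_ne a i with ha | ha
  · subst ha
    rw [if_pos rfl, hN _ _ hba, hN _ _ (hba.trans hij), mul_zero, add_zero]
  · rw [if_neg ha]; exact hN _ _ hba

lemma addRowMul_diag {N : Matrix (Fin n) (Fin n) F} (hN : UpperTriFin N)
    (α : F) {i j : Fin n} (hij : i < j) (a : Fin n) :
    addRowMul N α i j a a = N a a := by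
  unfold addRowMul
  rcases eq_or_ne a i with ha | ha
  · subst ha
    rw [if_pos rfl, hN j a hij, mul_zero, add_zero]
  · rw [if_neg ha]

lemma addColMul_apply_ne (M : Matrix (Fin m) (Fin n) F) (α : F) (i j : Fin n)
    {c : Fin n} (hc : c ≠ j) (a : Fin m) : addColMul M α i j a c = M a c :=
  if_neg hc

/-- The reduction step strictly decreases the low of column `j`. -/
lemma lowNat_addColMul_lt (M : Matrix (Fin m) (Fin n) F) {i j : Fin n}
    (hlow : lowNat M i = lowNat M j) (hne : lowNat M j ≠ 0) (r : Fin m)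
    (hr : r.val = lowNat M j - 1) :
    lowNat (addColMul M (M r j / M r i) i j) j < lowNat M j := by
  have hri : M r i ≠ 0 := by
    obtain ⟨a, ha, hav⟩ := lowVec_witness (v := fun x => M x i)
      (by rw [← lowNat_eq_lowVec, hlow]; exact hne)
    have : a = r := by
      apply Fin.ext
      rw [← lowNat_eq_lowVec, hlow] at hav
      omega
    exact this ▸ ha
  have hcol : ∀ a : Fin m, addColMul M (M r j / M r i) i j a j ≠ 0 →
      a.val + 1 ≤ lowNat M j - 1 := by
    intro a ha
    unfold addColMul at ha
    rw [if_pos rfl] at ha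
    by_contra hle
    push_neg at hle
    rcases Nat.lt_or_ge (lowNat M j) (a.val + 1) with hgt | hge
    · have h1 : M a j = 0 := eq_zero_of_lowNat_lt hgt
      have h2 : M a i = 0 := eq_zero_of_lowNat_lt (by rw [hlow]; exact hgt)
      rw [h1, h2] at ha
      simp at ha
    · have har : a = r := by apply Fin.ext; omega
      subst har
      rw [div_mul_cancel₀ _ hri] at ha
      simp at ha
  have : lowNat (addColMul M (M r j / M r i) i j) j ≤ lowNat M j - 1 := by
    apply Finset.sup_le
    intro a ha
    exact hcol a (by simpa using ha)
  omega

/-- Specification of the inner loop. -/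
lemma reduceColAux_spec : ∀ (fuel : ℕ) (s : RedState F m n) (j : Fin n),
    lowNat s.R j < fuel →
    (reduceColAux fuel s j).R * (reduceColAux fuel s j).U = s.R * s.U ∧
    (∀ a c, c ≠ j → (reduceColAux fuel s j).R a c = s.R a c) ∧
    ((UpperTriFin s.U ∧ ∀ i, s.U i i ≠ 0) →
      UpperTriFin (reduceColAux fuel s j).U ∧ ∀ i, (reduceColAux fuel s j).U i i ≠ 0) ∧
    ¬ (lowNat (reduceColAux fuel s j).R j ≠ 0 ∧
        ∃ i : Fin n, i < j ∧ lowNat (reduceColAux fuel s j).R i = lowNat (reduceColAux fuel s j).R j) := by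
  intro fuel
  induction fuel with
  | zero => intro s j h; omega
  | succ fuel ih =>
    intro s j hfuel
    rw [reduceColAux]
    by_cases h : lowNat s.R j ≠ 0 ∧ ∃ i : Fin n, i < j ∧ lowNat s.R i = lowNat s.R j
    · rw [dif_pos h]
      obtain ⟨hij, hloweq⟩ := h.2.choose_spec
      set i := h.2.choose
      set r : Fin m := ⟨lowNat s.R j - 1, by
        have hle : lowNat s.R j ≤ m := Finset.sup_le fun a _ => a.isLt
        have := h.1
        omega⟩ with hrdef
      set α := s.R r j / s.R r i with hα
      set s' : RedState F m n := ⟨addColMul s.R α i j, addColMul s.V α i j, addRowMul s.U α i j⟩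
        with hs'
      have hdec : lowNat s'.R j < lowNat s.R j :=
        lowNat_addColMul_lt s.R hloweq h.1 r rfl
      obtain ⟨ih1, ih2, ih3, ih4⟩ := ih s' j (by omega)
      refine ⟨?_, ?_, ?_, ih4⟩
      · rw [ih1]
        exact addColMul_mul_addRowMul s.R s.U α (ne_of_lt hij)
      · intro a c hc
        rw [ih2 a c hc]
        exact addColMul_apply_ne s.R α i j hc a
      · intro ⟨ht, hd⟩
        exact ih3 ⟨addRowMul_upperTri ht α hij, fun a => by
          rw [show s'.U a a = addRowMul s.U α i j a a from rfl, addRowMul_diag ht α hij]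
          exact hd a⟩
    · rw [dif_neg h]
      exact ⟨rfl, fun _ _ _ => rfl, id, h⟩

/-- Specification of the fold over columns. -/
lemma foldl_spec : ∀ (l : List (Fin n)) (s : RedState F m n), l.Pairwise (· < ·) →
    (l.foldl (fun s j => reduceColAux (m + 1) s j) s).R *
      (l.foldl (fun s j => reduceColAux (m + 1) s j) s).U = s.R * s.U ∧
    ((UpperTriFin s.U ∧ ∀ i, s.U i i ≠ 0) →
      UpperTriFin (l.foldl (fun s j => reduceColAux (m + 1) s j) s).U ∧
      ∀ i, (l.foldl (fun s j => reduceColAux (m + 1) s j) s).U i i ≠ 0) ∧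
    (∀ a c, c ∉ l → (l.foldl (fun s j => reduceColAux (m + 1) s j) s).R a c = s.R a c) ∧
    (∀ j ∈ l, ¬ (lowNat (l.foldl (fun s j => reduceColAux (m + 1) s j) s).R j ≠ 0 ∧
        ∃ i : Fin n, i < j ∧
          lowNat (l.foldl (fun s j => reduceColAux (m + 1) s j) s).R i =
            lowNat (l.foldl (fun s j => reduceColAux (m + 1) s j) s).R j)) := by
  intro l
  induction l with
  | nil => intro s _; exact ⟨rfl, id, fun _ _ _ => rfl, by simp⟩
  | cons j l ih =>
    intro s hpw
    rw [List.pairwise_cons] at hpw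
    obtain ⟨hj, hpw'⟩ := hpw
    have hfuel : lowNat s.R j < m + 1 := by
      have := lowVec_le (fun i => s.R i j)
      rw [← lowNat_eq_lowVec] at this
      omega
    obtain ⟨h1, h2, h3, h4⟩ := reduceColAux_spec (m + 1) s j hfuel
    set s' := reduceColAux (m + 1) s j with hs'
    obtain ⟨f1, f2, f3, f4⟩ := ih s' hpw'
    have hfoldl : (j :: l).foldl (fun s j => reduceColAux (m + 1) s j) s =
        l.foldl (fun s j => reduceColAux (m + 1) s j) s' := rfl
    rw [hfoldl]
    set t := l.foldl (fun s j => reduceColAux (m + 1) s j) s' with ht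
    refine ⟨by rw [f1, h1], fun hs => f2 (h3 hs), ?_, ?_⟩
    · intro a c hc
      rw [f3 a c (fun hcl => hc (List.mem_cons_of_mem _ hcl)),
        h2 a c (fun hcj => hc (hcj ▸ List.mem_cons_self))]
    · intro j' hj'
      rcases List.mem_cons.mp hj' with hj'j | hj'l
      · subst hj'j
        -- columns ≤ j' are untouched by the fold over l
        have hcols : ∀ c : Fin n, c ≤ j' → lowNat t.R c = lowNat s'.R c := by
          intro c hc
          apply lowNat_congr
          intro a
          apply f3
          intro hcl
          exact absurd (hj c hcl) (by omega)
        intro ⟨hne, i, hi, heq⟩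
        apply h4
        refine ⟨by rwa [← hcols j' le_rfl], i, hi, ?_⟩
        rw [← hcols i (le_of_lt hi), ← hcols j' le_rfl]
        exact heq
      · exact f4 j' hj'l

/-- Correctness of the lazy reduction. -/
lemma lazyReduce_spec (D : Matrix (Fin m) (Fin n) F) :
    (lazyReduce D).R * (lazyReduce D).U = D ∧
    UpperTriFin (lazyReduce D).U ∧ (∀ i, (lazyReduce D).U i i ≠ 0) ∧
    ReducedMat (lazyReduce D).R := by
  unfold lazyReduce
  obtain ⟨h1, h2, _, h4⟩ := foldl_spec (List.finRange n) (⟨D, 1, 1⟩ : RedState F m n)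
    (List.pairwise_lt_finRange n)
  have htri1 : UpperTriFin (1 : Matrix (Fin n) (Fin n) F) := by
    intro a b hba
    exact Matrix.one_apply_ne (by exact fun h => absurd h.symm (ne_of_lt hba))
  obtain ⟨hU1, hU2⟩ := h2 ⟨htri1, fun i => by simp⟩
  refine ⟨by simpa using h1, hU1, hU2, ?_⟩
  intro j₁ j₂ heq hne
  by_contra hne12
  rcases lt_or_gt_of_ne hne12 with hlt | hgt
  · exact h4 j₂ (List.mem_finRange j₂) ⟨by rwa [← heq], j₁, hlt, heq⟩
  · exact h4 j₁ (List.mem_finRange j₁) ⟨hne, j₂, hgt, heq.symm⟩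

end Helpers

/-- Key step of the Increase Death theorem.  Let `D = R U` come from the lazy
reduction, `τ` a negative simplex (column) paired with `σ = low_R(τ)`, and `τk`
a later column with `low_R(τk) < low_R(τ)`, all intermediate columns having low
at most `low_R(τ)`.  Transpose `τk` to the position immediately before `τ`.
If `U[τ, τk] = 0`, then in any reduced decomposition of the permuted matrix the
low of the column of `τk` (now at position `τ`) differs from `σ`, i.e. `τk` is
not paired with `σ`; if `U[τ, τk] ≠ 0`, then `τk` becomes paired with `σ`. -/
theorem increase_death_key_step (D : Matrix (Fin m) (Fin n) F) (τ τk : Fin n)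
    (hlt : τ < τk)
    (hτ : lowNat (lazyReduce D).R τ ≠ 0)
    (hk : lowNat (lazyReduce D).R τk < lowNat (lazyReduce D).R τ)
    (hmid : ∀ c : Fin n, τ < c → c < τk →
      lowNat (lazyReduce D).R c ≤ lowNat (lazyReduce D).R τ) :
    ((lazyReduce D).U τ τk = 0 →
      ∀ R' V', ReducedDecomp (fun r c => D r (movePerm τ τk c)) R' V' →
        lowNat R' τ ≠ lowNat (lazyReduce D).R τ) ∧
    ((lazyReduce D).U τ τk ≠ 0 →
      ∀ R' V', ReducedDecomp (fun r c => D r (movePerm τ τk c)) R' V' →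
        lowNat R' τ = lowNat (lazyReduce D).R τ) := by
  obtain ⟨hRU, hUt, hUd, hRred⟩ := lazyReduce_spec D
  set SR := (lazyReduce D).R with hSR
  set SU := (lazyReduce D).U with hSU
  set σ := lowNat SR τ with hσ
  set A : Matrix (Fin m) (Fin n) F := fun r c => D r (movePerm τ τk c) with hAdef
  set U' : Matrix (Fin n) (Fin n) F := fun k c => SU k (movePerm τ τk c) with hU'def
  have hπτ : movePerm τ τk τ = τk := by simp [movePerm]
  have hπlt : ∀ c : Fin n, c < τ → movePerm τ τk c = c := by
    intro c h
    have : c.val < τ.val := h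
    simp [movePerm, this]
  have hA : A = SR * U' := by
    funext r c
    rw [show A r c = D r (movePerm τ τk c) from rfl, ← hRU, Matrix.mul_apply, Matrix.mul_apply]
  -- the key computation: for `u` supported on `[0, τ]`, `A *ᵥ u = SR *ᵥ (U' *ᵥ u)`
  -- and `(U' *ᵥ u) k = SU k τk * u τ` for `k ≥ τ`.
  have hAy : ∀ u : Fin n → F, A.mulVec u = SR.mulVec (U'.mulVec u) := by
    intro u
    rw [hA, Matrix.mulVec_mulVec]
  have hyge : ∀ (u : Fin n → F), (∀ c, τ < c → u c = 0) →
      ∀ k : Fin n, τ ≤ k → U'.mulVec u k = SU k τk * u τ := by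
    intro u hu k hk
    rw [Matrix.mulVec, dotProduct]
    have : U' k τ * u τ = SU k τk * u τ := by rw [hU'def]; simp [hπτ]
    rw [← this]
    apply Finset.sum_eq_single_of_mem τ (Finset.mem_univ τ)
    intro c _ hcτ
    rcases lt_or_gt_of_ne hcτ with hcl | hcg
    · rw [show U' k c = SU k (movePerm τ τk c) from rfl, hπlt c hcl,
        hUt k c (lt_of_lt_of_le hcl hk), zero_mul]
    · rw [hu c hcg, mul_zero]
  -- diagonal entries of triangular products
  have hdiagmul : ∀ (W W' : Matrix (Fin n) (Fin n) F), UpperTriFin W → UpperTriFin W' →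
      W * W' = 1 → ∀ a, W a a * W' a a = 1 := by
    intro W W' hW hW' h a
    have h1 : (W * W') a a = (1 : Matrix (Fin n) (Fin n) F) a a := by rw [h]
    rw [Matrix.mul_apply, Matrix.one_apply_eq] at h1
    rw [← h1]
    symm
    apply Finset.sum_eq_single_of_mem a (Finset.mem_univ a)
    intro k _ hka
    rcases lt_or_gt_of_ne hka with hkl | hkg
    · rw [hW a k hkl, zero_mul]
    · rw [hW' k a hkg, mul_zero]
  constructor
  · -- case U τ τk = 0
    intro hU0 R' V' hdec heq
    obtain ⟨hR'red, hV't, hV'u, hR'eq⟩ := hdec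
    set u₀ : Fin n → F := fun k => V' k τ with hu₀def
    have hu₀ : ∀ c, τ < c → u₀ c = 0 := fun c hc => hV't c τ hc
    have hcolτ : (fun i => R' i τ) = A.mulVec u₀ := by
      funext i
      rw [hR'eq, Matrix.mul_apply, Matrix.mulVec, dotProduct]
    have hlow : lowNat R' τ =
        (Finset.univ.filter fun k : Fin n => U'.mulVec u₀ k ≠ 0).sup fun k => lowNat SR k := by
      rw [lowNat_eq_lowVec, hcolτ, hAy u₀, lowVec_mulVec hRred]
    rw [heq] at hlow
    have hne : (Finset.univ.filter fun k : Fin n => U'.mulVec u₀ k ≠ 0).Nonempty := by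
      rcases Finset.eq_empty_or_nonempty (Finset.univ.filter fun k : Fin n => U'.mulVec u₀ k ≠ 0)
        with he | hne
      · rw [he, Finset.sup_empty] at hlow
        exact absurd hlow hτ
      · exact hne
    obtain ⟨k, hkmem, hks⟩ := Finset.exists_mem_eq_sup _ hne fun k : Fin n => lowNat SR k
    have hyk : U'.mulVec u₀ k ≠ 0 := by simpa using hkmem
    have hkτ : k = τ := hRred k τ (by rw [← hks, ← hlow]) (by rw [← hks, ← hlow]; exact hτ)
    subst hkτ
    rw [hyge u₀ hu₀ k le_rfl, hU0, zero_mul] at hyk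
    exact hyk rfl
  · -- case U τ τk ≠ 0
    intro hUne R' V' hdec
    obtain ⟨hR'red, hV't, hV'u, hR'eq⟩ := hdec
    -- inverse of V'
    have hV'det : IsUnit V'.det := (Matrix.isUnit_iff_isUnit_det V').mp hV'u
    have hW'1 : V' * V'⁻¹ = 1 := Matrix.mul_nonsing_inv _ hV'det
    have hW'2 : V'⁻¹ * V' = 1 := Matrix.nonsing_inv_mul _ hV'det
    have hW't : UpperTriFin V'⁻¹ := by
      letI := Matrix.invertibleOfIsUnitDet V' hV'det
      have hbt : Matrix.BlockTriangular V' id := fun i j h => hV't i j h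
      exact fun i j h => Matrix.blockTriangular_inv_of_blockTriangular hbt h
    have hV'd : V' τ τ ≠ 0 := left_ne_zero_of_mul_eq_one (hdiagmul V' V'⁻¹ hV't hW't hW'1 τ)
    have hW'd : V'⁻¹ τ τ ≠ 0 := right_ne_zero_of_mul_eq_one (hdiagmul V' V'⁻¹ hV't hW't hW'1 τ)
    -- lower bound: lowNat R' τ ≥ σ
    set u₀ : Fin n → F := fun k => V' k τ with hu₀def
    have hu₀ : ∀ c, τ < c → u₀ c = 0 := fun c hc => hV't c τ hc
    have hcolτ : (fun i => R' i τ) = A.mulVec u₀ := by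
      funext i
      rw [hR'eq, Matrix.mul_apply, Matrix.mulVec, dotProduct]
    have hlow : lowNat R' τ =
        (Finset.univ.filter fun k : Fin n => U'.mulVec u₀ k ≠ 0).sup fun k => lowNat SR k := by
      rw [lowNat_eq_lowVec, hcolτ, hAy u₀, lowVec_mulVec hRred]
    have hge : σ ≤ lowNat R' τ := by
      rw [hlow]
      apply Finset.le_sup (f := fun k : Fin n => lowNat SR k)
      simp only [Finset.mem_filter, Finset.mem_univ, true_and]
      rw [hyge u₀ hu₀ τ le_rfl]
      exact mul_ne_zero hUne hV'd
    -- upper bound: construct a witness combination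
    have hUdet : IsUnit SU.det := by
      have hbt : Matrix.BlockTriangular SU id := fun i j h => hUt i j h
      rw [Matrix.det_of_upperTriangular hbt]
      rw [isUnit_iff_ne_zero]
      exact Finset.prod_ne_zero_iff.mpr fun i _ => hUd i
    have hU1 : SU * SU⁻¹ = 1 := Matrix.mul_nonsing_inv _ hUdet
    have hUinvt : UpperTriFin SU⁻¹ := by
      letI := Matrix.invertibleOfIsUnitDet SU hUdet
      have hbt : Matrix.BlockTriangular SU id := fun i j h => hUt i j h
      exact fun i j h => Matrix.blockTriangular_inv_of_blockTriangular hbt h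
    set g : Fin n → F := fun k => if k.val < τ.val then SU k τk else 0 with hgdef
    set h : Fin n → F := SU⁻¹.mulVec g with hhdef
    have hh0 : ∀ c : Fin n, ¬ c.val < τ.val → h c = 0 := by
      intro c hc
      rw [hhdef, Matrix.mulVec, dotProduct]
      apply Finset.sum_eq_zero
      intro j _
      rcases Nat.lt_or_ge j.val τ.val with hjτ | hjτ
      · have hjc : j < c := by
          have : τ.val ≤ c.val := by omega
          exact Fin.lt_def.mpr (by omega)
        rw [hUinvt c j hjc, zero_mul]
      · rw [hgdef]
        simp only [if_neg (by omega : ¬ j.val < τ.val)]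
        rw [mul_zero]
    set u' : Fin n → F := fun c => (if c = τ then 1 else 0) - h c with hu'def
    have hu' : ∀ c, τ < c → u' c = 0 := by
      intro c hc
      have hstep : u' c = (if c = τ then 1 else 0) - h c := rfl
      rw [hstep, if_neg (fun hh => absurd hh (ne_of_gt hc)), hh0 c (by
        have : τ.val < c.val := hc
        omega), sub_zero]
    have hu'τ : u' τ = 1 := by
      have hstep : u' τ = (if τ = τ then 1 else 0) - h τ := rfl
      rw [hstep, if_pos rfl, hh0 τ (by omega), sub_zero]
    -- compute U' *ᵥ u'
    have hy' : U'.mulVec u' = fun k => SU k τk - g k := by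
      have hUh : SU.mulVec h = g := by
        rw [hhdef, Matrix.mulVec_mulVec, hU1, Matrix.one_mulVec]
      funext k
      have key : ∀ c : Fin n, U' k c * u' c =
          (if c = τ then SU k τk else 0) - SU k c * h c := by
        intro c
        rcases eq_or_ne c τ with hcτ | hcτ
        · rw [hcτ, if_pos rfl, hu'τ, mul_one,
            show U' k τ = SU k (movePerm τ τk τ) from rfl, hπτ, hh0 τ (by omega),
            mul_zero, sub_zero]
        · have hstep : u' c = (if c = τ then 1 else 0) - h c := rfl
          rw [if_neg hcτ, hstep, if_neg hcτ, zero_sub, mul_neg, zero_sub]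
          rcases lt_or_gt_of_ne hcτ with hcl | hcg
          · rw [show U' k c = SU k (movePerm τ τk c) from rfl, hπlt c hcl]
          · rw [hh0 c (by have : τ.val < c.val := hcg; omega), mul_zero, mul_zero, neg_zero]
      rw [Matrix.mulVec, dotProduct, Finset.sum_congr rfl fun c _ => key c,
        Finset.sum_sub_distrib]
      rw [Finset.sum_ite_eq' Finset.univ τ fun _ => SU k τk]
      simp only [Finset.mem_univ, if_pos]
      have : ∑ c : Fin n, SU k c * h c = SU.mulVec h k := rfl
      rw [this, hUh]
    -- the witness has low at most σ
    have hbound : lowVec (A.mulVec u') ≤ σ := by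
      rw [hAy u', lowVec_mulVec hRred, hy']
      apply Finset.sup_le
      intro k hkmem
      have hkne : SU k τk - g k ≠ 0 := by simpa using hkmem
      have hkτ : τ.val ≤ k.val := by
        by_contra hlt2
        push_neg at hlt2
        rw [hgdef] at hkne
        simp only [if_pos hlt2, sub_self] at hkne
        exact hkne rfl
      have hg0 : g k = 0 := by rw [hgdef]; simp only [if_neg (by omega : ¬ k.val < τ.val)]
      rw [hg0, sub_zero] at hkne
      have hkτk : k ≤ τk := by
        by_contra hgt
        push_neg at hgt
        exact hkne (hUt k τk hgt)
      rcases eq_or_lt_of_le hkτ with heq | hlt'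
      · have : k = τ := Fin.ext heq.symm
        rw [this]
      rcases eq_or_lt_of_le hkτk with heq2 | hlt2
      · rw [heq2]
        exact le_of_lt hk
      · exact hmid k (Fin.lt_def.mpr hlt') hlt2
    -- minimality: lowNat R' τ ≤ lowVec (A *ᵥ u')
    have hmin : lowNat R' τ ≤ lowVec (A.mulVec u') := by
      have hA' : A = R' * V'⁻¹ := by
        rw [hR'eq, Matrix.mul_assoc, hW'1, Matrix.mul_one]
      set z : Fin n → F := V'⁻¹.mulVec u' with hzdef
      have hAz : A.mulVec u' = R'.mulVec z := by
        rw [hA', hzdef, Matrix.mulVec_mulVec]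
      have hzτ : z τ ≠ 0 := by
        rw [hzdef, Matrix.mulVec, dotProduct]
        have : ∑ j : Fin n, V'⁻¹ τ j * u' j = V'⁻¹ τ τ * u' τ := by
          apply Finset.sum_eq_single_of_mem τ (Finset.mem_univ τ)
          intro j _ hjτ
          rcases lt_or_gt_of_ne hjτ with hjl | hjg
          · rw [hW't τ j hjl, zero_mul]
          · rw [hu' j hjg, mul_zero]
        rw [this, hu'τ, mul_one]
        exact hW'd
      rw [hAz, lowVec_mulVec hR'red]
      apply Finset.le_sup (f := fun k : Fin n => lowNat R' k)
      simp only [Finset.mem_filter, Finset.mem_univ, true_and]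
      exact hzτ
    exact le_antisymm (hmin.trans hbound) hge
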